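/- arXiv:2602.09322 — 3 statements merged into one kernel-verified Lean document; each statement's English description precedes it below -/
import Mathlib

section
/- For h ∈ C²(ℝ) and ρ the intrinsic gauge, the Baouendi operator acts on the radial function h(ρ) by B_α h(ρ) = ψ ( h''(ρ) + ((Q-1)/ρ) h'(ρ) ), where Q = m + (α+1)k is the homogeneous dimension and ψ = |z|^{2α}/ρ^{2α}, at every point with z ≠ 0. -/
open MeasureTheory Real

noncomputable section

variable {m k : ℕ}

abbrev Pt (m k : ℕ) := EuclideanSpace ℝ (Fin m) × EuclideanSpace ℝ (Fin k)

/-- standard basis direction in the `z` variables -/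
def ez (i : Fin m) : Pt m k := (EuclideanSpace.single i (1:ℝ), 0)

/-- standard basis direction in the `t` variables -/
def et (j : Fin k) : Pt m k := (0, EuclideanSpace.single j (1:ℝ))

/-- second partial derivative in direction `v` -/
def pd2 (u : Pt m k → ℝ) (p v : Pt m k) : ℝ :=
  fderiv ℝ (fun q => fderiv ℝ u q v) p v

/-- Laplacian in the `z` variables -/
def lapz (u : Pt m k → ℝ) (p : Pt m k) : ℝ := ∑ i : Fin m, pd2 u p (ez i)

/-- Laplacian in the `t` variables -/
def lapt (u : Pt m k → ℝ) (p : Pt m k) : ℝ := ∑ j : Fin k, pd2 u p (et j)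

/-- the Baouendi operator `B_α u = Δ_z u + |z|^{2α} Δ_t u` -/
def Bop (α : ℝ) (u : Pt m k → ℝ) (p : Pt m k) : ℝ :=
  lapz u p + ‖p.1‖ ^ (2*α) * lapt u p

/-- the generator `Z = Σ z_i ∂_{z_i} + (α+1) Σ t_j ∂_{t_j}` -/
def Zop (α : ℝ) (u : Pt m k → ℝ) (p : Pt m k) : ℝ :=
  fderiv ℝ u p (p.1, (α+1) • p.2)

/-- the intrinsic gauge `ρ` -/
def rho (α : ℝ) (p : Pt m k) : ℝ :=
  (‖p.1‖ ^ (2*(α+1)) + (α+1)^2 * ‖p.2‖^2) ^ (1/(2*(α+1)))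

/-- the angle function `ψ = |z|^{2α}/ρ^{2α}` -/
def psi (α : ℝ) (p : Pt m k) : ℝ := ‖p.1‖ ^ (2*α) / rho α p ^ (2*α)

/-- `|∇_z u|²` -/
def gradzSq (u : Pt m k → ℝ) (p : Pt m k) : ℝ :=
  ∑ i : Fin m, (fderiv ℝ u p (ez i))^2

/-- `|∇_t u|²` -/
def gradtSq (u : Pt m k → ℝ) (p : Pt m k) : ℝ :=
  ∑ j : Fin k, (fderiv ℝ u p (et j))^2

/-- `|Xu|² = |∇_z u|² + |z|^{2α}|∇_t u|²` -/
def XgradSq (α : ℝ) (u : Pt m k → ℝ) (p : Pt m k) : ℝ :=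
  gradzSq u p + ‖p.1‖ ^ (2*α) * gradtSq u p

/-- anisotropic dilation `δ_λ(z,t) = (λz, λ^{α+1}t)` -/
def dil (α l : ℝ) (p : Pt m k) : Pt m k := (l • p.1, (l ^ (α+1)) • p.2)

/-- gauge ball `B_r` -/
def gball (α r : ℝ) : Set (Pt m k) := {p | rho α p < r}


namespace BRad

lemma sum_coord_sq {n : ℕ} (x : EuclideanSpace ℝ (Fin n)) : ∑ i, (x i)^2 = ‖x‖^2 := by
  rw [← real_inner_self_eq_norm_sq]
  simp only [PiLp.inner_apply, RCLike.inner_apply, conj_trivial, sq]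

lemma sum_quad {n : ℕ} (x : EuclideanSpace ℝ (Fin n)) (c1 c2 : ℝ) :
    ∑ i, (c1 * (x i)^2 + c2) = c1 * ‖x‖^2 + n * c2 := by
  rw [Finset.sum_add_distrib, ← Finset.mul_sum, sum_coord_sq, Finset.sum_const,
    Finset.card_univ, Fintype.card_fin, nsmul_eq_mul]

lemma norm_sq_rpow {n : ℕ} (x : EuclideanSpace ℝ (Fin n)) (y : ℝ) :
    ‖x‖ ^ (2*y) = ((‖x‖^2 : ℝ)) ^ y := by
  have h2 := Real.rpow_natCast ‖x‖ 2
  rw [← h2, ← Real.rpow_mul (norm_nonneg _)]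
  norm_num

def G (α : ℝ) (q : Pt m k) : ℝ := ((‖q.1‖^2 : ℝ)) ^ (α+1) + (α+1)^2 * ‖q.2‖^2
def Ds1 (q : Pt m k) : Pt m k →L[ℝ] ℝ :=
  2 • ((innerSL ℝ q.1).comp (ContinuousLinearMap.fst ℝ (EuclideanSpace ℝ (Fin m)) (EuclideanSpace ℝ (Fin k))))
def Ds2 (q : Pt m k) : Pt m k →L[ℝ] ℝ :=
  2 • ((innerSL ℝ q.2).comp (ContinuousLinearMap.snd ℝ (EuclideanSpace ℝ (Fin m)) (EuclideanSpace ℝ (Fin k))))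
def DG (α : ℝ) (q : Pt m k) : Pt m k →L[ℝ] ℝ :=
  ((α+1) * (‖q.1‖^2:ℝ) ^ α) • Ds1 q + ((α+1)^2 : ℝ) • Ds2 q
lemma hS1 (q : Pt m k) : HasFDerivAt (fun q : Pt m k => (‖q.1‖^2 : ℝ)) (Ds1 q) q :=
  hasFDerivAt_fst.norm_sq
lemma hS2 (q : Pt m k) : HasFDerivAt (fun q : Pt m k => (‖q.2‖^2 : ℝ)) (Ds2 q) q :=
  hasFDerivAt_snd.norm_sq

def ee (α : ℝ) : ℝ := 1/(2*(α+1))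

lemma S1_pos {q : Pt m k} (hq : q.1 ≠ 0) : 0 < (‖q.1‖^2 : ℝ) :=
  pow_pos (norm_pos_iff.mpr hq) 2

lemma G_pos (α : ℝ) (hα : 0 < α) {q : Pt m k} (hq : q.1 ≠ 0) : 0 < G α q :=
  add_pos_of_pos_of_nonneg (Real.rpow_pos_of_pos (S1_pos hq) _) (by positivity)

lemma hG (α : ℝ) {q : Pt m k} (hq : q.1 ≠ 0) : HasFDerivAt (G α) (DG α q) q := by
  have h1 := (hS1 q).rpow_const (p := α+1) (Or.inl (S1_pos hq).ne')
  have h2 := (hS2 q).const_mul ((α+1)^2)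
  have h3 := h1.add h2
  simp only [add_sub_cancel_right] at h3
  exact h3

lemma hR (α : ℝ) (hα : 0 < α) {q : Pt m k} (hq : q.1 ≠ 0) :
    HasFDerivAt (fun x : Pt m k => G α x ^ ee α)
      ((ee α * G α q ^ (ee α - 1)) • DG α q) q :=
  (hG α hq).rpow_const (Or.inl (G_pos α hα hq).ne')

lemma rho_eq (α : ℝ) (q : Pt m k) : rho α q = G α q ^ ee α := by
  unfold rho G ee
  congr 2
  rw [← Real.rpow_natCast ‖q.1‖ 2, ← Real.rpow_mul (norm_nonneg _)]
  norm_num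

lemma key (α : ℝ) (hα : 0 < α) {g : ℝ} (hg : 0 < g) :
    (g ^ ee α) ^ (2*α) * ((g ^ ee α) : ℝ)^2 = g := by
  have hb : α + 1 ≠ 0 := by positivity
  rw [← Real.rpow_natCast (g ^ ee α) 2, ← Real.rpow_mul hg.le, ← Real.rpow_mul hg.le,
    ← Real.rpow_add hg]
  rw [show ee α * (2*α) + ee α * ((2:ℕ):ℝ) = 1 by unfold ee; field_simp; ring]
  exact Real.rpow_one g

@[simp] lemma Ds1_ez (q : Pt m k) (i : Fin m) : Ds1 q (ez i) = 2 * q.1 i := by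
  simp [Ds1, ez, EuclideanSpace.inner_single_right]
@[simp] lemma Ds1_et (q : Pt m k) (j : Fin k) : Ds1 q (et j) = 0 := by
  simp [Ds1, et]
@[simp] lemma Ds2_ez (q : Pt m k) (i : Fin m) : Ds2 q (ez i) = 0 := by
  simp [Ds2, ez]
@[simp] lemma Ds2_et (q : Pt m k) (j : Fin k) : Ds2 q (et j) = 2 * q.2 j := by
  simp [Ds2, et, EuclideanSpace.inner_single_right]
@[simp] lemma proj_fst_ez (i : Fin m) :
    ((EuclideanSpace.proj i).comp
      (ContinuousLinearMap.fst ℝ (EuclideanSpace ℝ (Fin m)) (EuclideanSpace ℝ (Fin k)))) (ez i) = 1 := by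
  simp [ez, EuclideanSpace.single_apply]
@[simp] lemma proj_snd_et (j : Fin k) :
    ((EuclideanSpace.proj j).comp
      (ContinuousLinearMap.snd ℝ (EuclideanSpace ℝ (Fin m)) (EuclideanSpace ℝ (Fin k)))) (et j) = 1 := by
  simp [et, EuclideanSpace.single_apply]

lemma fderiv_ez (α : ℝ) (hα : 0 < α) (h : ℝ → ℝ) (hd : Differentiable ℝ h)
    {q : Pt m k} (hq : q.1 ≠ 0) (i : Fin m) :
    fderiv ℝ (fun x => h (G α x ^ ee α)) q (ez i)
      = deriv h (G α q ^ ee α) * ((‖q.1‖^2:ℝ) ^ α * (G α q ^ (ee α - 1) * q.1 i)) := by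
  have hu : HasFDerivAt (fun x : Pt m k => h (G α x ^ ee α))
      ((deriv h (G α q ^ ee α)) • ((ee α * G α q ^ (ee α - 1)) • DG α q)) q :=
    (hd _).hasDerivAt.comp_hasFDerivAt q (hR α hα hq)
  rw [hu.fderiv]
  have hb : α + 1 ≠ 0 := by linarith
  simp [DG, ee]
  field_simp
  ring_nf
  tauto

lemma fderiv_et (α : ℝ) (hα : 0 < α) (h : ℝ → ℝ) (hd : Differentiable ℝ h)
    {q : Pt m k} (hq : q.1 ≠ 0) (j : Fin k) :
    fderiv ℝ (fun x => h (G α x ^ ee α)) q (et j)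
      = deriv h (G α q ^ ee α) * ((α+1) * (G α q ^ (ee α - 1) * q.2 j)) := by
  have hu : HasFDerivAt (fun x : Pt m k => h (G α x ^ ee α))
      ((deriv h (G α q ^ ee α)) • ((ee α * G α q ^ (ee α - 1)) • DG α q)) q :=
    (hd _).hasDerivAt.comp_hasFDerivAt q (hR α hα hq)
  rw [hu.fderiv]
  have hb : α + 1 ≠ 0 := by linarith
  simp [DG, ee]
  field_simp
  ring_nf
  tauto

lemma pd2_ez (α : ℝ) (hα : 0 < α) (h : ℝ → ℝ) (hh : ContDiff ℝ 2 h)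
    {p : Pt m k} (hz : p.1 ≠ 0) (i : Fin m) :
    pd2 (fun x => h (G α x ^ ee α)) p (ez i) =
      deriv (deriv h) (G α p ^ ee α) *
        (((‖p.1‖^2:ℝ) ^ α)^2 * (G α p ^ (ee α - 1))^2 * (p.1 i)^2)
      + deriv h (G α p ^ ee α) *
        ( (‖p.1‖^2:ℝ) ^ α * G α p ^ (ee α - 1)
          + 2*(α+1)*(ee α - 1) * ((‖p.1‖^2:ℝ) ^ α)^2 * G α p ^ (ee α - 1 - 1) * (p.1 i)^2
          + 2*α * (‖p.1‖^2:ℝ) ^ (α - 1) * G α p ^ (ee α - 1) * (p.1 i)^2 ) := by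
  have hd1 : Differentiable ℝ h := hh.differentiable two_ne_zero
  have hdh : ContDiff ℝ 1 (deriv h) :=
    ((contDiff_succ_iff_deriv (n := 1)).mp (by exact_mod_cast hh)).2.2
  have hd2 : Differentiable ℝ (deriv h) := hdh.differentiable one_ne_zero
  have hop : IsOpen {q : Pt m k | q.1 ≠ 0} := isOpen_compl_singleton.preimage continuous_fst
  have hev : (fun q => fderiv ℝ (fun x => h (G α x ^ ee α)) q (ez i)) =ᶠ[nhds p]
      (fun q => deriv h (G α q ^ ee α) * ((‖q.1‖^2:ℝ) ^ α * (G α q ^ (ee α - 1) * q.1 i))) := by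
    filter_upwards [hop.mem_nhds hz] with q hq
    exact fderiv_ez α hα h hd1 hq i
  unfold pd2
  rw [hev.fderiv_eq]
  have hA : HasFDerivAt (fun q : Pt m k => deriv h (G α q ^ ee α))
      ((deriv (deriv h) (G α p ^ ee α)) • ((ee α * G α p ^ (ee α - 1)) • DG α p)) p :=
    (hd2 _).hasDerivAt.comp_hasFDerivAt p (hR α hα hz)
  have hB : HasFDerivAt (fun q : Pt m k => (‖q.1‖^2:ℝ) ^ α) ((α * (‖p.1‖^2:ℝ) ^ (α-1)) • Ds1 p) p :=
    (hS1 p).rpow_const (Or.inl (S1_pos hz).ne')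
  have hC : HasFDerivAt (fun q : Pt m k => G α q ^ (ee α - 1))
      (((ee α - 1) * G α p ^ (ee α - 1 - 1)) • DG α p) p :=
    (hG α hz).rpow_const (Or.inl (G_pos α hα hz).ne')
  have hD : HasFDerivAt (fun q : Pt m k => q.1 i)
      ((EuclideanSpace.proj i).comp (ContinuousLinearMap.fst ℝ (EuclideanSpace ℝ (Fin m)) (EuclideanSpace ℝ (Fin k)))) p := by
    exact ((EuclideanSpace.proj i).comp (ContinuousLinearMap.fst ℝ (EuclideanSpace ℝ (Fin m)) (EuclideanSpace ℝ (Fin k)))).hasFDerivAt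
  have hE : HasFDerivAt (fun q : Pt m k => deriv h (G α q ^ ee α) * ((‖q.1‖^2:ℝ) ^ α * (G α q ^ (ee α - 1) * q.1 i))) _ p :=
    hA.mul (hB.mul (hC.mul hD))
  rw [hE.fderiv]
  have hb : α + 1 ≠ 0 := by linarith
  simp only [ContinuousLinearMap.add_apply, ContinuousLinearMap.coe_smul', Pi.smul_apply,
    smul_eq_mul, DG, Ds1_ez, Ds2_ez, proj_fst_ez, ContinuousLinearMap.smul_apply, ee,
    mul_zero, add_zero, mul_one, Pi.mul_apply]
  field_simp
  ring

lemma pd2_et (α : ℝ) (hα : 0 < α) (h : ℝ → ℝ) (hh : ContDiff ℝ 2 h)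
    {p : Pt m k} (hz : p.1 ≠ 0) (j : Fin k) :
    pd2 (fun x => h (G α x ^ ee α)) p (et j) =
      deriv (deriv h) (G α p ^ ee α) * ((α+1)^2 * (G α p ^ (ee α - 1))^2 * (p.2 j)^2)
      + deriv h (G α p ^ ee α) *
        ( 2*(α+1)^3*(ee α - 1) * G α p ^ (ee α - 1 - 1) * (p.2 j)^2
          + (α+1) * G α p ^ (ee α - 1) ) := by
  have hd1 : Differentiable ℝ h := hh.differentiable two_ne_zero
  have hdh : ContDiff ℝ 1 (deriv h) :=
    ((contDiff_succ_iff_deriv (n := 1)).mp (by exact_mod_cast hh)).2.2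
  have hd2 : Differentiable ℝ (deriv h) := hdh.differentiable one_ne_zero
  have hop : IsOpen {q : Pt m k | q.1 ≠ 0} := isOpen_compl_singleton.preimage continuous_fst
  have hev : (fun q => fderiv ℝ (fun x => h (G α x ^ ee α)) q (et j)) =ᶠ[nhds p]
      (fun q => deriv h (G α q ^ ee α) * ((α+1) * (G α q ^ (ee α - 1) * q.2 j))) := by
    filter_upwards [hop.mem_nhds hz] with q hq
    exact fderiv_et α hα h hd1 hq j
  unfold pd2
  rw [hev.fderiv_eq]
  have hA : HasFDerivAt (fun q : Pt m k => deriv h (G α q ^ ee α))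
      ((deriv (deriv h) (G α p ^ ee α)) • ((ee α * G α p ^ (ee α - 1)) • DG α p)) p :=
    (hd2 _).hasDerivAt.comp_hasFDerivAt p (hR α hα hz)
  have hC : HasFDerivAt (fun q : Pt m k => G α q ^ (ee α - 1))
      (((ee α - 1) * G α p ^ (ee α - 1 - 1)) • DG α p) p :=
    (hG α hz).rpow_const (Or.inl (G_pos α hα hz).ne')
  have hD : HasFDerivAt (fun q : Pt m k => q.2 j)
      ((EuclideanSpace.proj j).comp (ContinuousLinearMap.snd ℝ (EuclideanSpace ℝ (Fin m)) (EuclideanSpace ℝ (Fin k)))) p := by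
    exact ((EuclideanSpace.proj j).comp (ContinuousLinearMap.snd ℝ (EuclideanSpace ℝ (Fin m)) (EuclideanSpace ℝ (Fin k)))).hasFDerivAt
  have hF := ((hC.mul hD).const_mul (α+1))
  have hE : HasFDerivAt (fun q : Pt m k => deriv h (G α q ^ ee α) * ((α+1) * (G α q ^ (ee α - 1) * q.2 j))) _ p :=
    hA.mul hF
  rw [hE.fderiv]
  have hb : α + 1 ≠ 0 := by linarith
  simp only [ContinuousLinearMap.add_apply, ContinuousLinearMap.coe_smul', Pi.smul_apply,
    smul_eq_mul, DG, Ds1_et, Ds2_et, proj_snd_et, ContinuousLinearMap.smul_apply, ee,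
    mul_zero, zero_mul, add_zero, zero_add, mul_one, Pi.mul_apply]
  field_simp
  ring

end BRad

theorem baouendi_on_radial (m k : ℕ) (α : ℝ) (hα : 0 < α)
    (h : ℝ → ℝ) (hh : ContDiff ℝ 2 h) (p : Pt m k) (hz : p.1 ≠ 0) :
    Bop α (fun q => h (rho α q)) p =
      psi α p * (deriv (deriv h) (rho α p)
        + (((m : ℝ) + (α+1)*k - 1) / rho α p) * deriv h (rho α p)) := by
  have hb : (0:ℝ) < α + 1 := by linarith
  have hfun : (fun q : Pt m k => h (rho α q)) = (fun q => h (BRad.G α q ^ BRad.ee α)) :=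
    funext fun q => by rw [BRad.rho_eq α q]
  have hspos : (0:ℝ) < ‖p.1‖^2 := BRad.S1_pos hz
  have hgpos : 0 < BRad.G α p := BRad.G_pos α hα hz
  have hrpos : 0 < BRad.G α p ^ BRad.ee α := Real.rpow_pos_of_pos hgpos _
  have hXpos : (0:ℝ) < (‖p.1‖^2:ℝ) ^ α := Real.rpow_pos_of_pos hspos _
  have hlapz : lapz (fun q => h (BRad.G α q ^ BRad.ee α)) p =
      (deriv (deriv h) (BRad.G α p ^ BRad.ee α) * (((‖p.1‖^2:ℝ)^α)^2 * (BRad.G α p ^ (BRad.ee α - 1))^2)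
        + deriv h (BRad.G α p ^ BRad.ee α) * (2*(α+1)*(BRad.ee α - 1)*((‖p.1‖^2:ℝ)^α)^2 * BRad.G α p ^ (BRad.ee α - 1 - 1)
            + 2*α*(‖p.1‖^2:ℝ)^(α-1) * BRad.G α p ^ (BRad.ee α - 1))) * ‖p.1‖^2
      + m * (deriv h (BRad.G α p ^ BRad.ee α) * ((‖p.1‖^2:ℝ)^α * BRad.G α p ^ (BRad.ee α - 1))) := by
    unfold lapz
    calc ∑ i : Fin m, pd2 (fun q => h (BRad.G α q ^ BRad.ee α)) p (ez i)
        = ∑ i : Fin m,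
          ((deriv (deriv h) (BRad.G α p ^ BRad.ee α) * (((‖p.1‖^2:ℝ)^α)^2 * (BRad.G α p ^ (BRad.ee α - 1))^2)
            + deriv h (BRad.G α p ^ BRad.ee α) * (2*(α+1)*(BRad.ee α - 1)*((‖p.1‖^2:ℝ)^α)^2 * BRad.G α p ^ (BRad.ee α - 1 - 1)
              + 2*α*(‖p.1‖^2:ℝ)^(α-1) * BRad.G α p ^ (BRad.ee α - 1))) * (p.1 i)^2
           + deriv h (BRad.G α p ^ BRad.ee α) * ((‖p.1‖^2:ℝ)^α * BRad.G α p ^ (BRad.ee α - 1))) :=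
          Finset.sum_congr rfl (fun i _ => by rw [BRad.pd2_ez α hα h hh hz i]; ring)
      _ = _ := BRad.sum_quad p.1 _ _
  have hlapt : lapt (fun q => h (BRad.G α q ^ BRad.ee α)) p =
      (deriv (deriv h) (BRad.G α p ^ BRad.ee α) * ((α+1)^2 * (BRad.G α p ^ (BRad.ee α - 1))^2)
        + deriv h (BRad.G α p ^ BRad.ee α) * (2*(α+1)^3*(BRad.ee α - 1) * BRad.G α p ^ (BRad.ee α - 1 - 1))) * ‖p.2‖^2
      + k * (deriv h (BRad.G α p ^ BRad.ee α) * ((α+1) * BRad.G α p ^ (BRad.ee α - 1))) := by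
    unfold lapt
    calc ∑ j : Fin k, pd2 (fun q => h (BRad.G α q ^ BRad.ee α)) p (et j)
        = ∑ j : Fin k,
          ((deriv (deriv h) (BRad.G α p ^ BRad.ee α) * ((α+1)^2 * (BRad.G α p ^ (BRad.ee α - 1))^2)
            + deriv h (BRad.G α p ^ BRad.ee α) * (2*(α+1)^3*(BRad.ee α - 1) * BRad.G α p ^ (BRad.ee α - 1 - 1))) * (p.2 j)^2
           + deriv h (BRad.G α p ^ BRad.ee α) * ((α+1) * BRad.G α p ^ (BRad.ee α - 1))) :=
          Finset.sum_congr rfl (fun j _ => by rw [BRad.pd2_et α hα h hh hz j]; ring)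
      _ = _ := BRad.sum_quad p.2 _ _
  unfold Bop psi
  rw [hfun, BRad.rho_eq α p, hlapz, hlapt, BRad.norm_sq_rpow p.1 α]
  have hkey := BRad.key α hα hgpos
  have hpow2a : (BRad.G α p ^ BRad.ee α) ^ (2*α) = BRad.G α p / (BRad.G α p ^ BRad.ee α)^2 := by
    rw [eq_div_iff (pow_ne_zero 2 hrpos.ne')]
    exact hkey
  have h1 : BRad.G α p ^ (BRad.ee α - 1) = BRad.G α p ^ BRad.ee α / BRad.G α p := by
    rw [Real.rpow_sub hgpos, Real.rpow_one]
  have h2 : BRad.G α p ^ (BRad.ee α - 1 - 1) = BRad.G α p ^ BRad.ee α / BRad.G α p / BRad.G α p := by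
    rw [Real.rpow_sub hgpos, Real.rpow_sub hgpos, Real.rpow_one]
  have h3 : (‖p.1‖^2:ℝ) ^ (α - 1) = (‖p.1‖^2:ℝ)^α / ‖p.1‖^2 := by
    rw [Real.rpow_sub hspos, Real.rpow_one]
  rw [hpow2a, h1, h2, h3]
  have hGexp : BRad.G α p = (‖p.1‖^2:ℝ)^α * ‖p.1‖^2 + (α+1)^2 * ‖p.2‖^2 := by
    unfold BRad.G
    rw [Real.rpow_add_one hspos.ne']
  set r := BRad.G α p ^ BRad.ee α with hrdef
  rw [hGexp]
  have hGpos' : (0:ℝ) < (‖p.1‖^2:ℝ)^α * ‖p.1‖^2 + (α+1)^2 * ‖p.2‖^2 := hGexp ▸ hgpos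
  have hee : BRad.ee α = 1/(2*(α+1)) := rfl
  rw [hee]
  field_simp
  ring
end
end

section
/- For any C¹ function v on ℝ^{m+k} \ {z = 0}, the intrinsic gradients of v and of the gauge ρ satisfy ⟨Xv, Xρ⟩ = Σ_{i=1}^{m+k} X_i v · X_i ρ = (Zv/ρ) ψ, where Z = Σ_i z_i ∂_{z_i} + (α+1) Σ_j t_j ∂_{t_j} and ψ = |z|^{2α}/ρ^{2α}. -/
open MeasureTheory Real

noncomputable section

variable {m k : ℕ}

open RealInnerProductSpace in
lemma rho_fderiv_apply (α : ℝ) (hα : 0 < α) (p : Pt m k) (hz : p.1 ≠ 0)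
    (w : Pt m k) :
    fderiv ℝ (rho α) p w
      = rho α p ^ (-(2*α+1)) * (‖p.1‖ ^ (2*α) * ⟪p.1, w.1⟫ + (α+1) * ⟪p.2, w.2⟫) := by
  have hα1 : (0:ℝ) < α + 1 := by linarith
  have hQpos : (0:ℝ) < ⟪p.1, p.1⟫ := by rw [real_inner_self_eq_norm_sq]; exact pow_pos (norm_pos_iff.2 hz) 2
  have hNpos : (0:ℝ) < ⟪p.1, p.1⟫ ^ (α+1) + (α+1)^2 * ⟪p.2, p.2⟫ := by
    have h1 : (0:ℝ) < ⟪p.1,p.1⟫ ^ (α+1) := rpow_pos_of_pos hQpos _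
    have h2 : (0:ℝ) ≤ ⟪p.2,p.2⟫ := real_inner_self_nonneg
    nlinarith [sq_nonneg (α+1)]
  have h1 : HasFDerivAt (fun q : Pt m k => ⟪q.1, q.1⟫) _ p :=
    (hasFDerivAt_fst).inner ℝ (hasFDerivAt_fst)
  have h2 := h1.rpow_const (p := α + 1) (Or.inl hQpos.ne')
  have h3' : HasFDerivAt (fun q : Pt m k => ⟪q.2, q.2⟫) _ p :=
    (hasFDerivAt_snd).inner ℝ (hasFDerivAt_snd)
  have h3 := h3'.const_mul ((α+1)^2)
  have h4 := h2.add h3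
  have h5 := h4.rpow_const (p := 1/(2*(α+1))) (Or.inl hNpos.ne')
  have hinner : ∀ (c : ℝ) (n : ℕ) (x : EuclideanSpace ℝ (Fin n)), ⟪x, x⟫ ^ c = ‖x‖ ^ (2*c) := by
    intro c n x
    rw [real_inner_self_eq_norm_sq, ← rpow_natCast ‖x‖ 2, ← rpow_mul (norm_nonneg _)]
    norm_num
  have hrho : rho α = fun q : Pt m k =>
      (⟪q.1, q.1⟫ ^ (α+1) + (α+1)^2 * ⟪q.2, q.2⟫) ^ (1/(2*(α+1))) := by
    funext q
    rw [rho, ← hinner (α+1), ← real_inner_self_eq_norm_sq]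
  have hfd : fderiv ℝ (rho α) p = fderiv ℝ (fun q : Pt m k =>
      (⟪q.1, q.1⟫ ^ (α+1) + (α+1)^2 * ⟪q.2, q.2⟫) ^ (1/(2*(α+1)))) p := by rw [hrho]
  have h5' : HasFDerivAt (fun q : Pt m k =>
      (⟪q.1, q.1⟫ ^ (α+1) + (α+1)^2 * ⟪q.2, q.2⟫) ^ (1/(2*(α+1)))) _ p := h5
  rw [hfd, h5'.fderiv]
  simp only [Pi.add_apply, ContinuousLinearMap.smul_apply, ContinuousLinearMap.add_apply,
    ContinuousLinearMap.comp_apply, ContinuousLinearMap.prod_apply, fderivInnerCLM_apply,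
    ContinuousLinearMap.coe_fst', ContinuousLinearMap.coe_snd', smul_eq_mul,
    real_inner_comm w.1 p.1, real_inner_comm w.2 p.2]
  have hrhopow : rho α p ^ (-(2*α+1))
      = (⟪p.1, p.1⟫ ^ (α+1) + (α+1)^2 * ⟪p.2, p.2⟫) ^ (1/(2*(α+1)) - 1) := by
    simp only [hrho]
    rw [← rpow_mul hNpos.le]
    congr 1
    field_simp
    ring
  have e1 : α + 1 - 1 = α := by ring
  rw [hrhopow, e1, hinner α m p.1]
  field_simp
  ring

open RealInnerProductSpace in
theorem intrinsic_gradient_pairing (m k : ℕ) (α : ℝ) (hα : 0 < α)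
    (v : Pt m k → ℝ) (hv : ∀ p : Pt m k, p.1 ≠ 0 → DifferentiableAt ℝ v p)
    (p : Pt m k) (hz : p.1 ≠ 0) :
    (∑ i : Fin m, fderiv ℝ v p (ez i) * fderiv ℝ (rho α) p (ez i))
      + ‖p.1‖ ^ (2*α) *
        (∑ j : Fin k, fderiv ℝ v p (et j) * fderiv ℝ (rho α) p (et j))
      = (Zop α v p / rho α p) * psi α p := by
  have hα1 : (0:ℝ) < α + 1 := by linarith
  have hρpos : 0 < rho α p := by
    have hN : (0:ℝ) < ‖p.1‖ ^ (2*(α+1)) + (α+1)^2 * ‖p.2‖^2 := by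
      have h1 := rpow_pos_of_pos (norm_pos_iff.2 hz) (2*(α+1))
      nlinarith [mul_nonneg (sq_nonneg (α+1)) (sq_nonneg ‖p.2‖)]
    exact rpow_pos_of_pos hN _
  set f := fderiv ℝ v p with hf
  have hez : ∀ i : Fin m, fderiv ℝ (rho α) p (ez i)
      = rho α p ^ (-(2*α+1)) * (‖p.1‖ ^ (2*α) * p.1 i) := by
    intro i
    rw [rho_fderiv_apply α hα p hz]
    simp [ez, EuclideanSpace.inner_single_right]
  have het : ∀ j : Fin k, fderiv ℝ (rho α) p (et j)
      = rho α p ^ (-(2*α+1)) * ((α+1) * p.2 j) := by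
    intro j
    rw [rho_fderiv_apply α hα p hz]
    simp [et, EuclideanSpace.inner_single_right]
  have hsingle : ∀ (n : ℕ) (x : EuclideanSpace ℝ (Fin n)),
      ∑ i, x i • EuclideanSpace.single i (1:ℝ) = x := by
    intro n x
    have h := (EuclideanSpace.basisFun (Fin n) ℝ).sum_repr x
    simpa [EuclideanSpace.basisFun_apply, EuclideanSpace.basisFun_repr] using h
  have hvec : ((p.1, (α+1) • p.2) : Pt m k)
      = (∑ i, p.1 i • (ez i : Pt m k)) + ∑ j, ((α+1) * p.2 j) • (et j : Pt m k) := by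
    apply Prod.ext
    · simp [ez, et, Prod.fst_sum, hsingle]
    · simp [ez, et, Prod.snd_sum, mul_smul, ← Finset.smul_sum, hsingle]
  have hZ : Zop α v p = (∑ i, p.1 i * f (ez i)) + ∑ j, ((α+1) * p.2 j) * f (et j) := by
    rw [Zop, hvec, ← hf]
    rw [map_add, map_sum, map_sum]
    simp [smul_eq_mul]
  have hs1 : ∑ i : Fin m, f (ez i) * (rho α p ^ (-(2*α+1)) * (‖p.1‖^(2*α) * p.1 i))
      = rho α p ^ (-(2*α+1)) * ‖p.1‖^(2*α) * ∑ i : Fin m, p.1 i * f (ez i) := by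
    rw [Finset.mul_sum]; exact Finset.sum_congr rfl fun i _ => by ring
  have hs2 : ∑ j : Fin k, f (et j) * (rho α p ^ (-(2*α+1)) * ((α+1) * p.2 j))
      = rho α p ^ (-(2*α+1)) * ∑ j : Fin k, ((α+1) * p.2 j) * f (et j) := by
    rw [Finset.mul_sum]; exact Finset.sum_congr rfl fun j _ => by ring
  have hc : rho α p ^ (-(2*α+1)) = 1 / (rho α p ^ (2*α) * rho α p) := by
    rw [show -(2*α+1) = -(2*α) + (-1) by ring, rpow_add hρpos, rpow_neg_one,
      rpow_neg (le_of_lt hρpos)]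
    field_simp
  have hρne : rho α p ≠ 0 := ne_of_gt hρpos
  have hρane : rho α p ^ (2*α) ≠ 0 := by positivity
  simp only [hez, het]
  rw [hs1, hs2, hZ, psi, hc]
  field_simp
end
end

section
/- The function E(z,t) = C ρ(z,t)^{-(Q-2)} with Q = m + (α+1)k > 2 satisfies B_α E = 0 at every point (z,t) with z ≠ 0 and (z,t) ≠ (0,0), i.e., it is harmonic for the Baouendi operator away from its pole and the degeneracy set. -/
open MeasureTheory Real RealInnerProductSpace

noncomputable section

variable {m k : ℕ}

def Xf (q : Pt m k) : ℝ := ⟪q.1, q.1⟫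
def Yf (q : Pt m k) : ℝ := ⟪q.2, q.2⟫
def gf (α : ℝ) (q : Pt m k) : ℝ := Xf q ^ (α+1) + (α+1)^2 * Yf q

def fstL (m k : ℕ) := ContinuousLinearMap.fst ℝ (EuclideanSpace ℝ (Fin m)) (EuclideanSpace ℝ (Fin k))
def sndL (m k : ℕ) := ContinuousLinearMap.snd ℝ (EuclideanSpace ℝ (Fin m)) (EuclideanSpace ℝ (Fin k))

lemma hXd (q : Pt m k) : HasFDerivAt (fun q : Pt m k => Xf q)
    ((2:ℝ) • ((innerSL ℝ q.1).comp (fstL m k))) q := by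
  have h1 := (fstL m k).hasFDerivAt (x := q)
  refine (h1.inner ℝ h1).congr_fderiv (ContinuousLinearMap.ext fun w => ?_)
  simp [fstL, fderivInnerCLM_apply, real_inner_comm, mul_comm, two_mul]

lemma hYd (q : Pt m k) : HasFDerivAt (fun q : Pt m k => Yf q)
    ((2:ℝ) • ((innerSL ℝ q.2).comp (sndL m k))) q := by
  have h1 := (sndL m k).hasFDerivAt (x := q)
  refine (h1.inner ℝ h1).congr_fderiv (ContinuousLinearMap.ext fun w => ?_)
  simp [sndL, fderivInnerCLM_apply, real_inner_comm, mul_comm, two_mul]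

lemma hA1d (v q : Pt m k) : HasFDerivAt (fun q : Pt m k => (⟪q.1, v.1⟫ : ℝ))
    ((innerSL ℝ v.1).comp (fstL m k)) q := by
  have h1 := (fstL m k).hasFDerivAt (x := q)
  refine (h1.inner ℝ (hasFDerivAt_const v.1 q)).congr_fderiv (ContinuousLinearMap.ext fun w => ?_)
  simp [fstL, fderivInnerCLM_apply, real_inner_comm, mul_comm]

lemma hA2d (v q : Pt m k) : HasFDerivAt (fun q : Pt m k => (⟪q.2, v.2⟫ : ℝ))
    ((innerSL ℝ v.2).comp (sndL m k)) q := by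
  have h1 := (sndL m k).hasFDerivAt (x := q)
  refine (h1.inner ℝ (hasFDerivAt_const v.2 q)).congr_fderiv (ContinuousLinearMap.ext fun w => ?_)
  simp [sndL, fderivInnerCLM_apply, real_inner_comm, mul_comm]

def DgCLM (α : ℝ) (q : Pt m k) : Pt m k →L[ℝ] ℝ :=
  ((α+1) * Xf q ^ α) • ((2:ℝ) • ((innerSL ℝ q.1).comp (fstL m k)))
  + ((α+1)^2 : ℝ) • ((2:ℝ) • ((innerSL ℝ q.2).comp (sndL m k)))

lemma hgd {α : ℝ} (hα : 0 < α) (q : Pt m k) : HasFDerivAt (gf α) (DgCLM α q) q := by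
  have h1 := (hXd q).rpow_const (p := α+1) (Or.inr (by linarith))
  have h2 := (hYd q).const_mul ((α+1)^2 : ℝ)
  refine (h1.add h2).congr_fderiv ?_
  unfold DgCLM
  rw [add_sub_cancel_right]

lemma hXpos {q : Pt m k} (hq : q.1 ≠ 0) : 0 < Xf q :=
  lt_of_le_of_ne real_inner_self_nonneg (fun h => hq (inner_self_eq_zero.1 h.symm))

lemma hgpos {α : ℝ} {q : Pt m k} (hα : 0 < α) (hq : q.1 ≠ 0) : 0 < gf α q := by
  have h1 : 0 < Xf q ^ (α+1) := rpow_pos_of_pos (hXpos hq) _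
  have hY : (0:ℝ) ≤ Yf q := real_inner_self_nonneg
  unfold gf; nlinarith [sq_nonneg (α+1)]

lemma hud {α γ Cc : ℝ} (hα : 0 < α) (q : Pt m k) (hq : q.1 ≠ 0) :
    HasFDerivAt (fun q : Pt m k => Cc * gf α q ^ γ) ((Cc * (γ * gf α q ^ (γ-1))) • DgCLM α q) q := by
  have h := ((hgd hα q).rpow_const (p := γ) (Or.inl (hgpos hα hq).ne')).const_mul Cc
  refine h.congr_fderiv ?_
  module

/-- value of the first derivative -/
def wv (α γ Cc : ℝ) (v q : Pt m k) : ℝ :=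
  (Cc * (γ * gf α q ^ (γ-1))) *
    ((α+1) * Xf q ^ α * (2 * ⟪q.1, v.1⟫) + (α+1)^2 * (2 * ⟪q.2, v.2⟫))

lemma fderiv_u_eq {α γ Cc : ℝ} (hα : 0 < α) {q : Pt m k} (hq : q.1 ≠ 0) (v : Pt m k) :
    fderiv ℝ (fun q : Pt m k => Cc * gf α q ^ γ) q v = wv α γ Cc v q := by
  rw [(hud hα q hq).fderiv]
  simp [DgCLM, wv, fstL, sndL]
  ring

/-- value of the second derivative -/
def pd2val (α γ Cc : ℝ) (p v : Pt m k) : ℝ :=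
  Cc * γ * ((γ-1) * gf α p ^ (γ-2) *
      ((α+1) * Xf p ^ α * (2 * ⟪p.1, v.1⟫) + (α+1)^2 * (2 * ⟪p.2, v.2⟫))^2
    + gf α p ^ (γ-1) * ((α+1) * (α * Xf p ^ (α-1) * (2 * ⟪p.1, v.1⟫)^2
        + Xf p ^ α * (2 * ⟪v.1, v.1⟫)) + (α+1)^2 * (2 * ⟪v.2, v.2⟫)))

lemma hwvd {α γ Cc : ℝ} (hα : 0 < α) {p : Pt m k} (hp : p.1 ≠ 0) (v : Pt m k) :
    HasFDerivAt (wv α γ Cc v)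
      (((Cc * γ) * ((γ-1) * gf α p ^ (γ-1-1))) • ((((α+1) * Xf p ^ α * (2 * ⟪p.1, v.1⟫)
          + (α+1)^2 * (2 * ⟪p.2, v.2⟫))) • DgCLM α p)
        + (Cc * (γ * gf α p ^ (γ-1))) • (((α+1) * (2 * ⟪p.1, v.1⟫) * (α * Xf p ^ (α-1))) •
              ((2:ℝ) • ((innerSL ℝ p.1).comp (fstL m k)))
          + ((α+1) * Xf p ^ α * 2) • ((innerSL ℝ v.1).comp (fstL m k))
          + ((α+1)^2 * 2) • ((innerSL ℝ v.2).comp (sndL m k)))) p := by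
  have hB : HasFDerivAt (fun q : Pt m k => Cc * (γ * gf α q ^ (γ-1)))
      (((Cc * γ) * ((γ-1) * gf α p ^ (γ-1-1))) • DgCLM α p) p := by
    have h := (((hgd hα p).rpow_const (p := γ-1) (Or.inl (hgpos hα hp).ne')).const_mul γ).const_mul Cc
    refine h.congr_fderiv ?_; module
  have hXa : HasFDerivAt (fun q : Pt m k => Xf q ^ α)
      ((α * Xf p ^ (α-1)) • ((2:ℝ) • ((innerSL ℝ p.1).comp (fstL m k)))) p :=
    (hXd p).rpow_const (Or.inl (hXpos hp).ne')
  have h1 : HasFDerivAt (fun q : Pt m k => (α+1) * Xf q ^ α * (2 * ⟪q.1, v.1⟫)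
        + (α+1)^2 * (2 * ⟪q.2, v.2⟫))
      ((((α+1) * (2 * ⟪p.1, v.1⟫) * (α * Xf p ^ (α-1))) •
          ((2:ℝ) • ((innerSL ℝ p.1).comp (fstL m k)))
        + ((α+1) * Xf p ^ α * 2) • ((innerSL ℝ v.1).comp (fstL m k))
        + ((α+1)^2 * 2) • ((innerSL ℝ v.2).comp (sndL m k)))) p := by
    have ha := ((hXa.const_mul (α+1)).mul ((hA1d v p).const_mul 2)).add
      (((hA2d v p).const_mul 2).const_mul ((α+1)^2))
    refine ha.congr_fderiv ?_
    module
  exact (hB.mul h1).congr_fderiv (by module)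

lemma pd2_eq {α γ Cc : ℝ} (hα : 0 < α) {p : Pt m k} (hp : p.1 ≠ 0) (v : Pt m k) :
    pd2 (fun q : Pt m k => Cc * gf α q ^ γ) p v = pd2val α γ Cc p v := by
  have hopen : IsOpen {q : Pt m k | q.1 ≠ 0} := isOpen_ne_fun (continuous_fst) (continuous_const)
  have hev : (fun q : Pt m k => fderiv ℝ (fun q : Pt m k => Cc * gf α q ^ γ) q v)
      =ᶠ[nhds p] wv α γ Cc v := by
    filter_upwards [hopen.mem_nhds hp] with q hq using fderiv_u_eq hα hq v
  unfold pd2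
  rw [hev.fderiv_eq, (hwvd hα hp v).fderiv]
  simp [DgCLM, pd2val, fstL, sndL]
  ring_nf

theorem fundamental_solution_harmonic (m k : ℕ) (α C : ℝ) (hα : 0 < α)
    (hQ : 2 < (m : ℝ) + (α+1)*k) (p : Pt m k) (hz : p.1 ≠ 0) :
    Bop α (fun q => C * rho α q ^ (-((m : ℝ) + (α+1)*k - 2))) p = 0 := by
  set Q : ℝ := (m : ℝ) + (α+1)*k with hQdef
  set γ : ℝ := (1/(2*(α+1))) * (-(Q - 2)) with hγdef
  have hc : (0:ℝ) < α + 1 := by linarith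
  -- rewrite the function as C * gf^γ
  have h2c : (2*(α+1)) ≠ 0 := by positivity
  have hγ2 : γ * (2*(α+1)) = -(Q - 2) := by
    rw [hγdef]; field_simp
  have hfun : (fun q : Pt m k => C * rho α q ^ (-(Q - 2)))
      = (fun q : Pt m k => C * gf α q ^ γ) := by
    funext q
    have hb1 : ‖q.1‖ ^ (2*(α+1)) = Xf q ^ (α+1) := by
      rw [Real.rpow_mul (norm_nonneg _), Real.rpow_two]
      congr 1
      rw [Xf, real_inner_self_eq_norm_sq]
    have hb2 : ‖q.2‖^2 = Yf q := by rw [Yf, real_inner_self_eq_norm_sq]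
    have hgnn : 0 ≤ gf α q := by
      have h1 : 0 ≤ Xf q ^ (α+1) := Real.rpow_nonneg real_inner_self_nonneg _
      have h2 : (0:ℝ) ≤ Yf q := real_inner_self_nonneg
      unfold gf; positivity
    rw [rho, hb1, hb2, hγdef, ← gf, Real.rpow_mul hgnn]
  clear_value γ Q
  rw [hfun]
  -- sum formulas
  have hXp := hXpos hz
  have hgp := hgpos hα hz
  have hsumX : ∑ i, p.1 i * p.1 i = Xf p := by
    rw [Xf]
    simp [PiLp.inner_apply, RCLike.inner_apply]
    rw [EuclideanSpace.norm_eq, Real.sq_sqrt (Finset.sum_nonneg fun i _ => sq_nonneg _)]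
    simp [Real.norm_eq_abs, sq_abs, pow_two, abs_mul_abs_self]
  have hsumY : ∑ j, p.2 j * p.2 j = Yf p := by
    rw [Yf]
    simp [PiLp.inner_apply, RCLike.inner_apply]
    rw [EuclideanSpace.norm_eq, Real.sq_sqrt (Finset.sum_nonneg fun i _ => sq_nonneg _)]
    simp [Real.norm_eq_abs, sq_abs, pow_two, abs_mul_abs_self]
  have hez : ∀ i : Fin m, pd2 (fun q : Pt m k => C * gf α q ^ γ) p (ez i) =
      (C * γ * ((γ-1) * gf α p ^ (γ-2) * (4*(α+1)^2*(Xf p ^ α)^2)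
        + gf α p ^ (γ-1) * ((α+1)*α*(Xf p ^ (α-1))*4))) * (p.1 i * p.1 i)
      + C * γ * (gf α p ^ (γ-1) * ((α+1) * (Xf p ^ α) * 2)) := by
    intro i
    rw [pd2_eq hα hz (ez i)]
    simp [pd2val, ez, EuclideanSpace.inner_single_right, EuclideanSpace.inner_single_left]
    ring
  have het : ∀ j : Fin k, pd2 (fun q : Pt m k => C * gf α q ^ γ) p (et j) =
      (C * γ * ((γ-1) * gf α p ^ (γ-2) * (4*(α+1)^4))) * (p.2 j * p.2 j)
      + C * γ * (gf α p ^ (γ-1) * ((α+1)^2 * 2)) := by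
    intro j
    rw [pd2_eq hα hz (et j)]
    simp [pd2val, et, EuclideanSpace.inner_single_right, EuclideanSpace.inner_single_left]
    ring
  have hlapz : lapz (fun q : Pt m k => C * gf α q ^ γ) p =
      (C * γ * ((γ-1) * gf α p ^ (γ-2) * (4*(α+1)^2*(Xf p ^ α)^2)
        + gf α p ^ (γ-1) * ((α+1)*α*(Xf p ^ (α-1))*4))) * Xf p
      + (C * γ * (gf α p ^ (γ-1) * ((α+1) * (Xf p ^ α) * 2))) * m := by
    rw [lapz, Finset.sum_congr rfl (fun i _ => hez i), Finset.sum_add_distrib,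
      ← Finset.mul_sum, hsumX, Finset.sum_const, Finset.card_univ, Fintype.card_fin,
      nsmul_eq_mul, mul_comm (m : ℝ)]
  have hlapt : lapt (fun q : Pt m k => C * gf α q ^ γ) p =
      (C * γ * ((γ-1) * gf α p ^ (γ-2) * (4*(α+1)^4))) * Yf p
      + (C * γ * (gf α p ^ (γ-1) * ((α+1)^2 * 2))) * k := by
    rw [lapt, Finset.sum_congr rfl (fun j _ => het j), Finset.sum_add_distrib,
      ← Finset.mul_sum, hsumY, Finset.sum_const, Finset.card_univ, Fintype.card_fin,
      nsmul_eq_mul, mul_comm (k : ℝ)]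
  have hnrm : ‖p.1‖ ^ (2*α) = Xf p ^ α := by
    rw [Real.rpow_mul (norm_nonneg _), Real.rpow_two]
    congr 1
    rw [Xf, real_inner_self_eq_norm_sq]
  rw [Bop, hlapz, hlapt, hnrm]
  -- algebraic identities
  have hA : Xf p ^ α = Xf p ^ (α-1) * Xf p := by
    rw [← Real.rpow_add_one hXp.ne']; norm_num
  have hC : gf α p ^ (γ-1) = gf α p ^ (γ-2) * gf α p := by
    rw [← Real.rpow_add_one hgp.ne']; ring_nf
  have hB : gf α p = Xf p ^ (α-1) * Xf p * Xf p + (α+1)^2 * Yf p := by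
    rw [gf, ← hA, ← Real.rpow_add_one hXp.ne']
  rw [hC, hA]
  set W := gf α p ^ (γ-2) with hW
  rw [hB]
  linear_combination (2*(α+1)*C*γ*W*(Xf p ^ (α-1))*(Xf p)*
    (Xf p ^ (α-1) * Xf p * Xf p + (α+1)^2 * Yf p)) * hγ2
    - (2*(α+1)*C*γ*W*(Xf p ^ (α-1))*(Xf p)*
    (Xf p ^ (α-1) * Xf p * Xf p + (α+1)^2 * Yf p)) * hQdef
end
end
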